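/- Let B^{(0)} ∈ ℂ^{n×n} be Hermitian positive definite and 2 ≤ k ≤ n. Let J_0, J_1, J_2, … be independent uniformly random size-k subsets of [n], and suppose the matrices B^{(t)} are defined recursively by B^{(t+1)} = (T_t^{-1})* B^{(t)} T_t^{-1}, where T_t is determined by an arbitrary fixed rule assigning to each positive definite matrix B and size-k subset J a nonsingular matrix S(B,J) ∈ ℂ^{k×k} with S(B,J)* B_{JJ} S(B,J) diagonal (T_t being S(B^{(t)},J_t)^{-1} on the J_t×J_t block, after permuting J_t to the first k coordinates, and identity elsewhere). Then for every t ≥ 0, E[Γ(B^{(t)})] = (1 − k(k−1)/(n(n−1)))^t · Γ(B^{(0)}). -/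

import Mathlib

open Matrix
open scoped ComplexOrder

noncomputable section

/-- `D_B^{1/2}`: the diagonal matrix whose entries are the square roots of the
diagonal entries of `B`. -/
def sqrtDiag {n : ℕ} (B : Matrix (Fin n) (Fin n) ℂ) : Matrix (Fin n) (Fin n) ℂ :=
  Matrix.diagonal fun i => (Real.sqrt (B i i).re : ℂ)

/-- The diagonal normalization `B̂ = D_B^{-1/2} B D_B^{-1/2}`. -/
def hatM {n : ℕ} (B : Matrix (Fin n) (Fin n) ℂ) : Matrix (Fin n) (Fin n) ℂ :=
  (sqrtDiag B)⁻¹ * B * (sqrtDiag B)⁻¹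

/-- The potential function `Γ(B) = tr(B̂⁻¹) − n` (a real number for Hermitian
positive definite `B`). -/
def Gamma {n : ℕ} (B : Matrix (Fin n) (Fin n) ℂ) : ℝ :=
  (Matrix.trace ((hatM B)⁻¹)).re - n

/-- The set of pivot sets: size-`k` subsets of `[n]`. -/
abbrev PivotSet (n k : ℕ) := {J : Finset (Fin n) // J.card = k}

/-- `B_{JJ}`: the `k × k` principal submatrix of `B` on the rows and columns indexed by `J`
(listed in increasing order). -/
def subJ {n k : ℕ} (J : Finset (Fin n)) (hJ : J.card = k) (B : Matrix (Fin n) (Fin n) ℂ) :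
    Matrix (Fin k) (Fin k) ℂ :=
  B.submatrix (fun a => ((J.orderIsoOfFin hJ) a).val) (fun a => ((J.orderIsoOfFin hJ) a).val)

/-- The `n × n` matrix which is `S` on the `J × J` block (after the order-preserving
identification of `J` with `{1, …, k}`) and agrees with the identity elsewhere; this is
`P_σ* [[S, 0], [0, I]] P_σ` for the order-preserving permutation `σ` with `σ(J) = [k]`. -/
def embedJ {n k : ℕ} (J : Finset (Fin n)) (hJ : J.card = k) (S : Matrix (Fin k) (Fin k) ℂ) :
    Matrix (Fin n) (Fin n) ℂ :=
  Matrix.of fun a b =>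
    if ha : a ∈ J then
      if hb : b ∈ J then
        S ((J.orderIsoOfFin hJ).symm ⟨a, ha⟩) ((J.orderIsoOfFin hJ).symm ⟨b, hb⟩)
      else 0
    else if a = b then 1 else 0


open Finset

namespace GammaAux
variable {n k : ℕ} {J : Finset (Fin n)} {hJ : J.card = k}

lemma diag_eq_re {B : Matrix (Fin n) (Fin n) ℂ} (hB : B.IsHermitian) (i : Fin n) :
    ((B i i).re : ℂ) = B i i := by
  rw [← Complex.conj_eq_iff_re]
  have := congrFun (congrFun hB.symm i) i
  simpa [Matrix.conjTranspose_apply] using this.symm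

lemma diag_re_pos {B : Matrix (Fin n) (Fin n) ℂ} (hB : B.PosDef) (i : Fin n) :
    0 < (B i i).re := by
  have h := hB.re_dotProduct_pos (x := Pi.single i 1) (by
    intro h
    have := congrFun h i
    simp [Pi.single_eq_same] at this)
  simpa [Matrix.dotProduct_mulVec, dotProduct, Pi.single_apply, mulVec,
    Finset.sum_ite_eq, Finset.sum_ite_eq'] using h

lemma sqrtDiag_isUnit {B : Matrix (Fin n) (Fin n) ℂ} (hB : B.PosDef) :
    IsUnit (sqrtDiag B).det := by
  rw [sqrtDiag, Matrix.det_diagonal]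
  refine (Finset.prod_ne_zero_iff.2 fun i _ => ?_).isUnit
  simp only [ne_eq, Complex.ofReal_eq_zero]
  exact (Real.sqrt_pos.2 (diag_re_pos hB i)).ne'

lemma gamma_eq {B : Matrix (Fin n) (Fin n) ℂ} (hB : B.PosDef) :
    Gamma B = (∑ i, B i i * B⁻¹ i i).re - n := by
  have hD := sqrtDiag_isUnit hB
  have hinv : (hatM B)⁻¹ = sqrtDiag B * (B⁻¹ * sqrtDiag B) := by
    rw [hatM, Matrix.mul_inv_rev, Matrix.mul_inv_rev, Matrix.nonsing_inv_nonsing_inv _ hD]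
  rw [Gamma, hinv]
  congr 2
  rw [Matrix.trace]
  congr 1
  funext i
  have h1 : Real.sqrt (B i i).re * Real.sqrt (B i i).re = (B i i).re :=
    Real.mul_self_sqrt (diag_re_pos hB i).le
  have : (sqrtDiag B * (B⁻¹ * sqrtDiag B)) i i =
      (Real.sqrt (B i i).re : ℂ) * (B⁻¹ i i * (Real.sqrt (B i i).re : ℂ)) := by
    simp [sqrtDiag, Matrix.diagonal_mul, Matrix.mul_diagonal]
  rw [Matrix.diag_apply, this]
  rw [mul_comm (B⁻¹ i i), ← mul_assoc, ← Complex.ofReal_mul, h1, diag_eq_re hB.isHermitian]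

lemma posdef_conj {B : Matrix (Fin n) (Fin n) ℂ} (hB : B.PosDef)
    {N : Matrix (Fin n) (Fin n) ℂ} (hN : IsUnit N.det) : (Nᴴ * B * N).PosDef := by
  refine ⟨?_, fun x hx => ?_⟩
  · have := hB.isHermitian
    unfold Matrix.IsHermitian at *
    simp [Matrix.conjTranspose_mul, this, Matrix.mul_assoc]
  · exact (hB.conjTranspose_mul_mul_same (Matrix.mulVec_injective_iff_isUnit.2
      ((Matrix.isUnit_iff_isUnit_det N).2 hN))).2 hx

lemma sum_orderIso (J : Finset (Fin n)) (hJ : J.card = k) (f : Fin n → ℂ) :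
    ∑ c ∈ J, f c = ∑ p : Fin k, f ((J.orderIsoOfFin hJ p : Fin n)) := by
  rw [← Finset.sum_coe_sort J f]
  exact (Equiv.sum_comp (J.orderIsoOfFin hJ).toEquiv (fun x => f x.1)).symm

lemma embedJ_mem {S : Matrix (Fin k) (Fin k) ℂ} {a b : Fin n} (ha : a ∈ J) (hb : b ∈ J) :
    embedJ J hJ S a b
      = S ((J.orderIsoOfFin hJ).symm ⟨a, ha⟩) ((J.orderIsoOfFin hJ).symm ⟨b, hb⟩) := by
  simp [embedJ, ha, hb]

lemma embedJ_mem_not {S : Matrix (Fin k) (Fin k) ℂ} {a b : Fin n} (ha : a ∈ J) (hb : b ∉ J) :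
    embedJ J hJ S a b = 0 := by simp [embedJ, ha, hb]

lemma embedJ_not {S : Matrix (Fin k) (Fin k) ℂ} {a : Fin n} (ha : a ∉ J) (b : Fin n) :
    embedJ J hJ S a b = if a = b then 1 else 0 := by simp [embedJ, ha]

lemma embedJ_not_right {S : Matrix (Fin k) (Fin k) ℂ} {b : Fin n} (hb : b ∉ J) (a : Fin n) :
    embedJ J hJ S a b = if a = b then 1 else 0 := by
  by_cases ha : a ∈ J
  · rw [embedJ_mem_not ha hb, if_neg]; rintro rfl; exact hb ha
  · exact embedJ_not ha b

lemma embedJ_one : embedJ J hJ (1 : Matrix (Fin k) (Fin k) ℂ) = 1 := by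
  ext a b
  by_cases ha : a ∈ J
  · by_cases hb : b ∈ J
    · rw [embedJ_mem ha hb, Matrix.one_apply, Matrix.one_apply]
      by_cases hab : a = b
      · subst hab; simp
      · rw [if_neg, if_neg hab]
        intro h
        exact hab (by simpa using congrArg (fun x => ((J.orderIsoOfFin hJ x : Fin n))) h)
    · rw [embedJ_mem_not ha hb, Matrix.one_apply, if_neg]; rintro rfl; exact hb ha
  · rw [embedJ_not ha, Matrix.one_apply]

lemma embedJ_mul (S₁ S₂ : Matrix (Fin k) (Fin k) ℂ) :
    embedJ J hJ S₁ * embedJ J hJ S₂ = embedJ J hJ (S₁ * S₂) := by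
  ext a b
  rw [Matrix.mul_apply]
  by_cases ha : a ∈ J
  · have hres : ∑ c, embedJ J hJ S₁ a c * embedJ J hJ S₂ c b
        = ∑ c ∈ J, embedJ J hJ S₁ a c * embedJ J hJ S₂ c b := by
      refine (Finset.sum_subset J.subset_univ fun c _ hc => ?_).symm
      rw [embedJ_mem_not ha hc, zero_mul]
    rw [hres, sum_orderIso J hJ]
    by_cases hb : b ∈ J
    · have : ∀ p : Fin k,
          embedJ J hJ S₁ a ((J.orderIsoOfFin hJ p : Fin n))
            * embedJ J hJ S₂ ((J.orderIsoOfFin hJ p : Fin n)) b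
          = S₁ ((J.orderIsoOfFin hJ).symm ⟨a, ha⟩) p * S₂ p ((J.orderIsoOfFin hJ).symm ⟨b, hb⟩) := by
        intro p
        rw [embedJ_mem ha (J.orderIsoOfFin hJ p).2, embedJ_mem (J.orderIsoOfFin hJ p).2 hb]
        congr 2 <;> rw [OrderIso.symm_apply_eq]
      rw [Finset.sum_congr rfl fun p _ => this p, embedJ_mem ha hb, Matrix.mul_apply]
    · have : ∀ p : Fin k,
          embedJ J hJ S₁ a ((J.orderIsoOfFin hJ p : Fin n))
            * embedJ J hJ S₂ ((J.orderIsoOfFin hJ p : Fin n)) b = 0 := fun p => by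
        rw [embedJ_mem_not (J.orderIsoOfFin hJ p).2 hb, mul_zero]
      rw [Finset.sum_congr rfl fun p _ => this p, embedJ_mem_not ha hb, Finset.sum_const_zero]
  · have : ∀ c, embedJ J hJ S₁ a c * embedJ J hJ S₂ c b
        = (if a = c then 1 else 0) * embedJ J hJ S₂ c b := fun c => by rw [embedJ_not ha]
    rw [Finset.sum_congr rfl fun c _ => this c, embedJ_not ha (hJ := hJ)]
    simp [ite_mul, embedJ_not ha]

lemma embedJ_conjTranspose (S : Matrix (Fin k) (Fin k) ℂ) :
    (embedJ J hJ S)ᴴ = embedJ J hJ Sᴴ := by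
  ext a b
  rw [Matrix.conjTranspose_apply]
  by_cases ha : a ∈ J
  · by_cases hb : b ∈ J
    · rw [embedJ_mem hb ha, embedJ_mem ha hb, Matrix.conjTranspose_apply]
    · rw [embedJ_not hb, embedJ_mem_not ha hb, if_neg (by rintro rfl; exact hb ha)]
      simp
  · rw [embedJ_not ha, embedJ_not_right ha b]
    by_cases hab : b = a
    · subst hab; simp
    · rw [if_neg hab, if_neg (by rintro rfl; exact hab rfl)]; simp

lemma symm_coe (p : Fin k) :
    (J.orderIsoOfFin hJ).symm ⟨(J.orderIsoOfFin hJ p : Fin n), (J.orderIsoOfFin hJ p).2⟩ = p := by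
  rw [OrderIso.symm_apply_eq]

lemma embedJ_mul_notmem (S₁ : Matrix (Fin k) (Fin k) ℂ) (A : Matrix (Fin n) (Fin n) ℂ)
    {a : Fin n} (ha : a ∉ J) (b : Fin n) : (embedJ J hJ S₁ * A) a b = A a b := by
  rw [Matrix.mul_apply]
  simp [embedJ_not ha, ite_mul]

lemma mul_embedJ_notmem (A : Matrix (Fin n) (Fin n) ℂ) (S₂ : Matrix (Fin k) (Fin k) ℂ)
    {b : Fin n} (hb : b ∉ J) (a : Fin n) : (A * embedJ J hJ S₂) a b = A a b := by
  rw [Matrix.mul_apply]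
  simp [embedJ_not_right hb, mul_ite, eq_comm]

lemma embedJ_mul_mem (S₁ : Matrix (Fin k) (Fin k) ℂ) (A : Matrix (Fin n) (Fin n) ℂ)
    {a : Fin n} (ha : a ∈ J) (b : Fin n) :
    (embedJ J hJ S₁ * A) a b
      = ∑ p, S₁ ((J.orderIsoOfFin hJ).symm ⟨a, ha⟩) p * A ((J.orderIsoOfFin hJ p : Fin n)) b := by
  rw [Matrix.mul_apply]
  have hres : ∑ c, embedJ J hJ S₁ a c * A c b = ∑ c ∈ J, embedJ J hJ S₁ a c * A c b := by
    refine (Finset.sum_subset J.subset_univ fun c _ hc => ?_).symm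
    rw [embedJ_mem_not ha hc, zero_mul]
  rw [hres, sum_orderIso J hJ]
  refine Finset.sum_congr rfl fun p _ => ?_
  rw [embedJ_mem ha (J.orderIsoOfFin hJ p).2, symm_coe]

lemma mul_embedJ_mem (A : Matrix (Fin n) (Fin n) ℂ) (S₂ : Matrix (Fin k) (Fin k) ℂ)
    {b : Fin n} (hb : b ∈ J) (a : Fin n) :
    (A * embedJ J hJ S₂) a b
      = ∑ q, A a ((J.orderIsoOfFin hJ q : Fin n)) * S₂ q ((J.orderIsoOfFin hJ).symm ⟨b, hb⟩) := by
  rw [Matrix.mul_apply]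
  have hres : ∑ c, A a c * embedJ J hJ S₂ c b = ∑ c ∈ J, A a c * embedJ J hJ S₂ c b := by
    refine (Finset.sum_subset J.subset_univ fun c _ hc => ?_).symm
    rw [embedJ_not hc, if_neg (by rintro rfl; exact hc hb), mul_zero]
  rw [hres, sum_orderIso J hJ]
  refine Finset.sum_congr rfl fun q _ => ?_
  rw [embedJ_mem (J.orderIsoOfFin hJ q).2 hb, symm_coe]

lemma subJ_conj (S₁ S₂ : Matrix (Fin k) (Fin k) ℂ) (A : Matrix (Fin n) (Fin n) ℂ) :
    subJ J hJ (embedJ J hJ S₁ * A * embedJ J hJ S₂) = S₁ * subJ J hJ A * S₂ := by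
  ext p q
  show (embedJ J hJ S₁ * A * embedJ J hJ S₂) _ _ = _
  rw [mul_embedJ_mem _ _ (J.orderIsoOfFin hJ q).2, symm_coe]
  rw [Matrix.mul_apply (M := S₁ * subJ J hJ A)]
  refine Finset.sum_congr rfl fun q' _ => ?_
  rw [embedJ_mul_mem _ _ (J.orderIsoOfFin hJ p).2, symm_coe, Matrix.mul_apply]
  rfl

lemma conj_notmem (S₁ S₂ : Matrix (Fin k) (Fin k) ℂ) (A : Matrix (Fin n) (Fin n) ℂ)
    {a b : Fin n} (ha : a ∉ J) (hb : b ∉ J) :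
    (embedJ J hJ S₁ * A * embedJ J hJ S₂) a b = A a b := by
  rw [mul_embedJ_notmem _ _ hb, embedJ_mul_notmem _ _ ha]

lemma sumJ_eq (A C : Matrix (Fin n) (Fin n) ℂ) :
    ∑ i ∈ J, ∑ j ∈ J, A i j * C j i = Matrix.trace (subJ J hJ A * subJ J hJ C) := by
  rw [sum_orderIso J hJ (f := fun i => ∑ j ∈ J, A i j * C j i)]
  rw [Matrix.trace]
  refine Finset.sum_congr rfl fun p _ => ?_
  rw [sum_orderIso J hJ, Matrix.diag_apply, Matrix.mul_apply]
  rfl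


variable (update : Matrix (Fin n) (Fin n) ℂ → PivotSet n k → Matrix (Fin n) (Fin n) ℂ)

lemma step
    (hupd : ∀ (B' : Matrix (Fin n) (Fin n) ℂ) (J : PivotSet n k), B'.PosDef →
      ∃ S : Matrix (Fin k) (Fin k) ℂ, IsUnit S.det ∧
        (Sᴴ * subJ J.1 J.2 B' * S).IsDiag ∧
        update B' J = ((embedJ J.1 J.2 S⁻¹)⁻¹)ᴴ * B' * (embedJ J.1 J.2 S⁻¹)⁻¹)
    {B : Matrix (Fin n) (Fin n) ℂ} (hB : B.PosDef) (J : PivotSet n k) :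
    (update B J).PosDef ∧
      Gamma (update B J)
        = Gamma B + ∑ i ∈ J.1, ∑ j ∈ J.1.erase i, (B i j * B⁻¹ j i).re := by
  obtain ⟨S, hSdet, hdiag, hueq⟩ := hupd B J hB
  set Jf := J.1 with hJf
  have hJc : Jf.card = k := J.2
  have hmul1 : embedJ Jf hJc S * embedJ Jf hJc S⁻¹ = 1 := by
    rw [embedJ_mul, Matrix.mul_nonsing_inv _ hSdet, embedJ_one]
  have hmul2 : embedJ Jf hJc S⁻¹ * embedJ Jf hJc S = 1 := by
    rw [embedJ_mul, Matrix.nonsing_inv_mul _ hSdet, embedJ_one]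
  have hNdet : IsUnit (embedJ Jf hJc S).det :=
    IsUnit.of_mul_eq_one _ (by rw [← Matrix.det_mul, hmul1, Matrix.det_one])
  have hMinv : (embedJ Jf hJc S⁻¹)⁻¹ = embedJ Jf hJc S := Matrix.inv_eq_right_inv hmul2
  set N := embedJ Jf hJc S with hN
  have hupdate : update B J = Nᴴ * B * N := by rw [hueq, hMinv]
  have hpos : (Nᴴ * B * N).PosDef := posdef_conj hB hNdet
  have hNH : Nᴴ = embedJ Jf hJc Sᴴ := embedJ_conjTranspose S
  have hNinv : N⁻¹ = embedJ Jf hJc S⁻¹ := Matrix.inv_eq_right_inv (by rw [hmul1])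
  have hBinv : (Nᴴ * B * N)⁻¹ = embedJ Jf hJc S⁻¹ * B⁻¹ * embedJ Jf hJc (S⁻¹)ᴴ := by
    rw [Matrix.mul_inv_rev, Matrix.mul_inv_rev, hNinv, ← Matrix.conjTranspose_nonsing_inv,
      hNinv, embedJ_conjTranspose, Matrix.mul_assoc]
  set B' := Nᴴ * B * N with hB'
  have hoff : ∀ i : Fin n, i ∉ Jf → B' i i * B'⁻¹ i i = B i i * B⁻¹ i i := by
    intro i hi
    rw [hB', hBinv]
    rw [show Nᴴ * B * N = embedJ Jf hJc Sᴴ * B * embedJ Jf hJc S by rw [hNH]]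
    rw [conj_notmem _ _ _ hi hi, conj_notmem _ _ _ hi hi]
  have hsubB' : subJ Jf hJc B' = Sᴴ * subJ Jf hJc B * S := by
    rw [hB', hNH, subJ_conj]
  have hsubB'inv : subJ Jf hJc (B'⁻¹) = S⁻¹ * subJ Jf hJc B⁻¹ * (S⁻¹)ᴴ := by
    rw [hBinv, subJ_conj]
  have hdiagJ : ∀ i ∈ Jf, ∀ j ∈ Jf, i ≠ j → B' i j = 0 := by
    intro i hi j hj hij
    have h1 : subJ Jf hJc B' ((Jf.orderIsoOfFin hJc).symm ⟨i, hi⟩)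
        ((Jf.orderIsoOfFin hJc).symm ⟨j, hj⟩) = B' i j := by
      simp only [subJ, Matrix.submatrix_apply, OrderIso.apply_symm_apply]
    rw [← h1, hsubB']
    refine hdiag ?_
    intro h
    have h2 := congrArg (Jf.orderIsoOfFin hJc) h
    rw [OrderIso.apply_symm_apply, OrderIso.apply_symm_apply] at h2
    exact hij (congrArg Subtype.val h2)
  have hJsum : ∑ i ∈ Jf, B' i i * B'⁻¹ i i = ∑ i ∈ Jf, ∑ j ∈ Jf, B i j * B⁻¹ j i := by
    have h1 : ∀ i ∈ Jf, B' i i * B'⁻¹ i i = ∑ j ∈ Jf, B' i j * B'⁻¹ j i := by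
      intro i hi
      exact (Finset.sum_eq_single_of_mem (f := fun j => B' i j * B'⁻¹ j i) i hi fun j hj hne => by
        show B' i j * B'⁻¹ j i = 0
        rw [hdiagJ i hi j hj (Ne.symm hne), zero_mul]).symm
    rw [Finset.sum_congr rfl h1, sumJ_eq (hJ := hJc), sumJ_eq (hJ := hJc), hsubB', hsubB'inv]
    have h2 : Sᴴ * subJ Jf hJc B * S * (S⁻¹ * subJ Jf hJc B⁻¹ * (S⁻¹)ᴴ)
        = Sᴴ * (subJ Jf hJc B * subJ Jf hJc B⁻¹) * (S⁻¹)ᴴ := by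
      have h3 : S * (S⁻¹ * subJ Jf hJc B⁻¹ * (S⁻¹)ᴴ)
          = subJ Jf hJc B⁻¹ * (S⁻¹)ᴴ := by
        rw [← Matrix.mul_assoc, ← Matrix.mul_assoc, Matrix.mul_nonsing_inv _ hSdet,
          Matrix.one_mul]
      rw [Matrix.mul_assoc (Sᴴ * subJ Jf hJc B), h3]
      simp only [Matrix.mul_assoc]
    rw [h2, Matrix.trace_mul_cycle, ← Matrix.conjTranspose_mul,
      Matrix.mul_nonsing_inv _ hSdet, Matrix.conjTranspose_one, Matrix.one_mul]
  -- assemble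
  have hsplit : ∀ C : Matrix (Fin n) (Fin n) ℂ,
      (∑ i, C i i) = ∑ i ∈ Jf, C i i + ∑ i ∈ Jfᶜ, C i i :=
    fun C => (Finset.sum_add_sum_compl Jf _).symm
  have hdiff : (∑ i, B' i i * B'⁻¹ i i)
      = (∑ i, B i i * B⁻¹ i i) + ∑ i ∈ Jf, ∑ j ∈ Jf.erase i, B i j * B⁻¹ j i := by
    have e1 : (∑ i, B' i i * B'⁻¹ i i)
        = ∑ i ∈ Jf, ∑ j ∈ Jf, B i j * B⁻¹ j i + ∑ i ∈ Jfᶜ, B i i * B⁻¹ i i := by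
      rw [show (∑ i, B' i i * B'⁻¹ i i)
          = ∑ i ∈ Jf, B' i i * B'⁻¹ i i + ∑ i ∈ Jfᶜ, B' i i * B'⁻¹ i i from
        (Finset.sum_add_sum_compl Jf _).symm, hJsum]
      congr 1
      exact Finset.sum_congr rfl fun i hi => hoff i (by simpa using hi)
    have e2 : (∑ i, B i i * B⁻¹ i i)
        = ∑ i ∈ Jf, B i i * B⁻¹ i i + ∑ i ∈ Jfᶜ, B i i * B⁻¹ i i :=
      (Finset.sum_add_sum_compl Jf _).symm
    rw [e1, e2]
    have e3 : ∀ i ∈ Jf, ∑ j ∈ Jf, B i j * B⁻¹ j i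
        = B i i * B⁻¹ i i + ∑ j ∈ Jf.erase i, B i j * B⁻¹ j i :=
      fun i hi => (Finset.add_sum_erase Jf _ hi).symm
    rw [Finset.sum_congr rfl e3, Finset.sum_add_distrib]
    ring
  constructor
  · rw [hupdate]; exact hpos
  · rw [hupdate, gamma_eq hpos, gamma_eq hB, hdiff]
    simp only [Complex.add_re, Complex.re_sum]
    ring

lemma count_pairs (hk : 2 ≤ k) {i j : Fin n} (hij : i ≠ j) :
    (Finset.univ.filter (fun J : PivotSet n k => i ∈ J.1 ∧ j ∈ J.1)).card
      = (n-2).choose (k-2) := by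
  have hbase : (((Finset.univ : Finset (Fin n)).erase i).erase j).card = n - 2 := by
    rw [Finset.card_erase_of_mem (Finset.mem_erase.2 ⟨hij.symm, Finset.mem_univ j⟩),
      Finset.card_erase_of_mem (Finset.mem_univ i), Finset.card_univ, Fintype.card_fin]
    omega
  rw [show (n-2).choose (k-2)
      = ((((Finset.univ : Finset (Fin n)).erase i).erase j).powersetCard (k-2)).card by
    rw [Finset.card_powersetCard, hbase]]
  refine Finset.card_bij' (fun J _ => (J.1.erase i).erase j)
    (fun K hK => ⟨insert i (insert j K), ?_⟩) ?_ ?_ ?_ ?_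
  · rw [Finset.mem_powersetCard] at hK
    obtain ⟨hsub, hcard⟩ := hK
    have hjK : j ∉ K := fun h => Finset.notMem_erase j _ (hsub h)
    have hiK : i ∉ K := fun h => Finset.notMem_erase i _ (Finset.mem_of_mem_erase (hsub h))
    have hijK : i ∉ insert j K := by
      simp only [Finset.mem_insert]
      rintro (rfl | h)
      exacts [hij rfl, hiK h]
    rw [Finset.card_insert_of_notMem hijK, Finset.card_insert_of_notMem hjK, hcard]
    omega
  · intro J hJmem
    simp only [Finset.mem_filter] at hJmem
    obtain ⟨-, hiJ, hjJ⟩ := hJmem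
    rw [Finset.mem_powersetCard]
    constructor
    · exact Finset.erase_subset_erase j (Finset.erase_subset_erase i J.1.subset_univ)
    · have hjJ' : j ∈ J.1.erase i := Finset.mem_erase.2 ⟨hij.symm, hjJ⟩
      rw [Finset.card_erase_of_mem hjJ', Finset.card_erase_of_mem hiJ, J.2]
      omega
  · intro K hK
    rw [Finset.mem_powersetCard] at hK
    simp only [Finset.mem_filter, Finset.mem_univ, true_and]
    constructor
    · exact Finset.mem_insert_self i _
    · exact Finset.mem_insert_of_mem (Finset.mem_insert_self j K)
  · intro J hJmem
    simp only [Finset.mem_filter] at hJmem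
    obtain ⟨-, hiJ, hjJ⟩ := hJmem
    apply Subtype.ext
    show insert i (insert j ((J.1.erase i).erase j)) = J.1
    rw [Finset.insert_erase (Finset.mem_erase.2 ⟨hij.symm, hjJ⟩), Finset.insert_erase hiJ]
  · intro K hK
    rw [Finset.mem_powersetCard] at hK
    obtain ⟨hsub, hcard⟩ := hK
    have hjK : j ∉ K := fun h => Finset.notMem_erase j _ (hsub h)
    have hiK : i ∉ K := fun h => Finset.notMem_erase i _ (Finset.mem_of_mem_erase (hsub h))
    have hijK : i ∉ insert j K := by
      simp only [Finset.mem_insert]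
      rintro (rfl | h)
      exacts [hij rfl, hiK h]
    show ((insert i (insert j K)).erase i).erase j = K
    rw [Finset.erase_insert hijK, Finset.erase_insert hjK]

lemma sum_pairs (hk : 2 ≤ k) (c : Fin n → Fin n → ℝ) :
    ∑ J : PivotSet n k, ∑ i ∈ J.1, ∑ j ∈ J.1.erase i, c i j
      = ((n-2).choose (k-2) : ℝ) * ∑ i, ∑ j ∈ Finset.univ.erase i, c i j := by
  have hJrw : ∀ J : PivotSet n k, ∑ i ∈ J.1, ∑ j ∈ J.1.erase i, c i j
      = ∑ i, ∑ j ∈ Finset.univ.erase i, if i ∈ J.1 ∧ j ∈ J.1 then c i j else 0 := by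
    intro J
    have hinner : ∀ i : Fin n,
        (∑ j ∈ Finset.univ.erase i, if i ∈ J.1 ∧ j ∈ J.1 then c i j else 0)
          = if i ∈ J.1 then ∑ j ∈ J.1.erase i, c i j else 0 := by
      intro i
      by_cases hi : i ∈ J.1
      · simp only [hi, true_and, if_true]
        rw [Finset.sum_ite_mem, Finset.erase_inter, Finset.univ_inter]
      · simp [hi]
    rw [Finset.sum_congr rfl fun i _ => hinner i, Finset.sum_ite_mem, Finset.univ_inter]
  rw [Finset.sum_congr rfl fun J _ => hJrw J, Finset.sum_comm]
  rw [Finset.mul_sum]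
  refine Finset.sum_congr rfl fun i _ => ?_
  rw [Finset.sum_comm, Finset.mul_sum]
  refine Finset.sum_congr rfl fun j hj => ?_
  have hij : i ≠ j := fun h => (Finset.mem_erase.1 hj).1 h.symm
  rw [Finset.sum_ite, Finset.sum_const, Finset.sum_const_zero, add_zero,
    count_pairs hk hij, nsmul_eq_mul]

lemma total_offdiag {B : Matrix (Fin n) (Fin n) ℂ} (hB : B.PosDef) :
    ∑ i, ∑ j ∈ Finset.univ.erase i, (B i j * B⁻¹ j i).re = - Gamma B := by
  have htr : ∑ i, ∑ j, B i j * B⁻¹ j i = (n : ℂ) := by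
    have h1 : ∑ i, ∑ j, B i j * B⁻¹ j i = Matrix.trace (B * B⁻¹) := by
      rw [Matrix.trace]
      exact Finset.sum_congr rfl fun i _ => by rw [Matrix.diag_apply, Matrix.mul_apply]
    rw [h1, Matrix.mul_nonsing_inv _ ((Matrix.isUnit_iff_isUnit_det _).1 hB.isUnit),
      Matrix.trace_one]
    simp
  have hsplit : ∀ i : Fin n, ∑ j ∈ Finset.univ.erase i, B i j * B⁻¹ j i
      = (∑ j, B i j * B⁻¹ j i) - B i i * B⁻¹ i i := by
    intro i
    rw [← Finset.add_sum_erase Finset.univ _ (Finset.mem_univ i)]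
    ring
  have h2 : ∑ i, ∑ j ∈ Finset.univ.erase i, B i j * B⁻¹ j i
      = (n : ℂ) - ∑ i, B i i * B⁻¹ i i := by
    rw [Finset.sum_congr rfl fun i _ => hsplit i, Finset.sum_sub_distrib, htr]
  have h3 := congrArg Complex.re h2
  rw [Complex.re_sum] at h3
  simp only [Complex.sub_re, Complex.natCast_re] at h3
  rw [Finset.sum_congr rfl fun i (_ : i ∈ Finset.univ) => (Complex.re_sum _ _).symm, h3,
    gamma_eq hB]
  ring

lemma choose_nat_id (hk : 2 ≤ k) (hkn : k ≤ n) :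
    n.choose k * (k * (k-1)) = (n-2).choose (k-2) * (n * (n-1)) := by
  obtain ⟨k', rfl⟩ : ∃ k', k = k' + 2 := ⟨k - 2, by omega⟩
  obtain ⟨n', rfl⟩ : ∃ n', n = n' + 2 := ⟨n - 2, by omega⟩
  simp only [Nat.add_sub_cancel]
  rw [show k'+2-1 = k'+1 from rfl, show n'+2-1 = n'+1 from rfl]
  have h1 := Nat.add_one_mul_choose_eq (n'+1) (k'+1)
  have h2 := Nat.add_one_mul_choose_eq n' k'
  calc (n'+2).choose (k'+2) * ((k'+2) * (k'+1))
      = ((n'+2).choose (k'+2) * (k'+2)) * (k'+1) := by ring_nf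
    _ = ((n'+2) * (n'+1).choose (k'+1)) * (k'+1) := by
        rw [show (n'+2).choose (k'+2) * (k'+2) = (n'+2) * (n'+1).choose (k'+1) from h1.symm]
    _ = (n'+2) * ((n'+1) * n'.choose k') := by
        rw [mul_assoc, show (n'+1).choose (k'+1) * (k'+1) = (n'+1) * n'.choose k' from h2.symm]
    _ = n'.choose k' * ((n'+2) * (n'+1)) := by ring_nf

lemma card_pivot : Fintype.card (PivotSet n k) = n.choose k := by
  rw [show Fintype.card (PivotSet n k) = (Fintype.card (Fin n)).choose k from
    Fintype.card_finset_len k, Fintype.card_fin]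

lemma step_sum (hk : 2 ≤ k) (hkn : k ≤ n)
    (hupd : ∀ (B' : Matrix (Fin n) (Fin n) ℂ) (J : PivotSet n k), B'.PosDef →
      ∃ S : Matrix (Fin k) (Fin k) ℂ, IsUnit S.det ∧
        (Sᴴ * subJ J.1 J.2 B' * S).IsDiag ∧
        update B' J = ((embedJ J.1 J.2 S⁻¹)⁻¹)ᴴ * B' * (embedJ J.1 J.2 S⁻¹)⁻¹)
    {B : Matrix (Fin n) (Fin n) ℂ} (hB : B.PosDef) :
    ∑ Jp : PivotSet n k, Gamma (update B Jp)
      = (1 - ((k:ℝ) * ((k:ℝ)-1)) / ((n:ℝ) * ((n:ℝ)-1))) * Gamma B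
          * (Fintype.card (PivotSet n k) : ℝ) := by
  rw [Finset.sum_congr rfl fun Jp (_ : Jp ∈ Finset.univ) => (step update hupd hB Jp).2,
    Finset.sum_add_distrib, Finset.sum_const, Finset.card_univ, sum_pairs hk,
    total_offdiag hB, card_pivot]
  have hn2 : 2 ≤ n := le_trans hk hkn
  have hcast : (n.choose k : ℝ) * ((k:ℝ) * ((k:ℝ)-1))
      = ((n-2).choose (k-2) : ℝ) * ((n:ℝ) * ((n:ℝ)-1)) := by
    have hid := congrArg (fun m : ℕ => (m : ℝ)) (choose_nat_id hk hkn)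
    push_cast [Nat.cast_sub (show 1 ≤ k by omega), Nat.cast_sub (show 1 ≤ n by omega)] at hid
    convert hid using 2
  have hn2' : (2:ℝ) ≤ (n:ℝ) := by exact_mod_cast hn2
  have hnn : ((n:ℝ) * ((n:ℝ)-1)) ≠ 0 := mul_ne_zero (by linarith) (by linarith)
  have hn1 : (n:ℝ) - 1 ≠ 0 := by linarith
  have hn0 : (n:ℝ) ≠ 0 := by linarith
  rw [nsmul_eq_mul]
  field_simp
  linear_combination (Gamma B) * hcast

lemma main_sum (hk : 2 ≤ k) (hkn : k ≤ n)
    (hupd : ∀ (B' : Matrix (Fin n) (Fin n) ℂ) (J : PivotSet n k), B'.PosDef →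
      ∃ S : Matrix (Fin k) (Fin k) ℂ, IsUnit S.det ∧
        (Sᴴ * subJ J.1 J.2 B' * S).IsDiag ∧
        update B' J = ((embedJ J.1 J.2 S⁻¹)⁻¹)ᴴ * B' * (embedJ J.1 J.2 S⁻¹)⁻¹) :
    ∀ (t : ℕ) (B : Matrix (Fin n) (Fin n) ℂ), B.PosDef →
      ∑ ω : Fin t → PivotSet n k, Gamma ((List.ofFn ω).foldl update B)
        = (1 - ((k:ℝ) * ((k:ℝ)-1)) / ((n:ℝ) * ((n:ℝ)-1))) ^ t * Gamma B
            * (Fintype.card (PivotSet n k) : ℝ) ^ t := by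
  intro t
  induction t with
  | zero => intro B hB; simp
  | succ t ih =>
    intro B hB
    rw [← Equiv.sum_comp (Fin.consEquiv (fun _ : Fin (t+1) => PivotSet n k))
      (fun ω => Gamma ((List.ofFn ω).foldl update B)), Fintype.sum_prod_type]
    have hinner : ∀ (a : PivotSet n k) (w : Fin t → PivotSet n k),
        Gamma ((List.ofFn ((Fin.consEquiv (fun _ : Fin (t+1) => PivotSet n k)) (a, w))).foldl
            update B)
          = Gamma ((List.ofFn w).foldl update (update B a)) := by
      intro a w
      congr 1
      rw [List.ofFn_succ]
      simp [Fin.consEquiv]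
    have h1 : ∀ a : PivotSet n k,
        ∑ w : Fin t → PivotSet n k,
            Gamma ((List.ofFn ((Fin.consEquiv (fun _ : Fin (t+1) => PivotSet n k)) (a, w))).foldl
              update B)
          = (1 - ((k:ℝ) * ((k:ℝ)-1)) / ((n:ℝ) * ((n:ℝ)-1))) ^ t * Gamma (update B a)
              * (Fintype.card (PivotSet n k) : ℝ) ^ t := by
      intro a
      rw [Finset.sum_congr rfl fun w (_ : w ∈ Finset.univ) => hinner a w]
      exact ih (update B a) (step update hupd hB a).1
    rw [Finset.sum_congr rfl fun a (_ : a ∈ Finset.univ) => h1 a]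
    have h2 : ∑ a : PivotSet n k,
        (1 - ((k:ℝ) * ((k:ℝ)-1)) / ((n:ℝ) * ((n:ℝ)-1))) ^ t * Gamma (update B a)
            * (Fintype.card (PivotSet n k) : ℝ) ^ t
        = (1 - ((k:ℝ) * ((k:ℝ)-1)) / ((n:ℝ) * ((n:ℝ)-1))) ^ t
            * (Fintype.card (PivotSet n k) : ℝ) ^ t * ∑ a : PivotSet n k, Gamma (update B a) := by
      rw [Finset.mul_sum]
      exact Finset.sum_congr rfl fun a _ => by ring
    rw [h2, step_sum update hk hkn hupd hB]
    ring

end GammaAux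

/-- global linear convergence in expectation: for the two-sided
generalized factorization algorithm with randomized size-`k` pivoting (driven by an
arbitrary fixed rule `update` which, on each positive definite input and pivot set `J`,
performs a congruence diagonalizing the `J × J` block),
`E[Γ(B^{(t)})] = (1 − k(k−1)/(n(n−1)))^t · Γ(B^{(0)})`;
the expectation is the average over all pivot sequences `ω : Fin t → PivotSet n k`. -/
theorem gamma_linear_convergence {n k : ℕ} (hk : 2 ≤ k) (hkn : k ≤ n)
    (B : Matrix (Fin n) (Fin n) ℂ) (hB : B.PosDef)
    (update : Matrix (Fin n) (Fin n) ℂ → PivotSet n k → Matrix (Fin n) (Fin n) ℂ)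
    (hupd : ∀ (B' : Matrix (Fin n) (Fin n) ℂ) (J : PivotSet n k), B'.PosDef →
      ∃ S : Matrix (Fin k) (Fin k) ℂ, IsUnit S.det ∧
        (Sᴴ * subJ J.1 J.2 B' * S).IsDiag ∧
        update B' J = ((embedJ J.1 J.2 S⁻¹)⁻¹)ᴴ * B' * (embedJ J.1 J.2 S⁻¹)⁻¹)
    (t : ℕ) :
    (∑ ω : Fin t → PivotSet n k, Gamma ((List.ofFn ω).foldl update B)) /
        (Fintype.card (Fin t → PivotSet n k) : ℝ) =
      (1 - ((k : ℝ) * ((k : ℝ) - 1)) / ((n : ℝ) * ((n : ℝ) - 1))) ^ t * Gamma B := by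
  have h := GammaAux.main_sum update hk hkn hupd t B hB
  rw [h]
  have hC : (0:ℝ) < (Fintype.card (PivotSet n k) : ℝ) := by
    rw [GammaAux.card_pivot]
    exact_mod_cast Nat.choose_pos hkn
  have hcard : (Fintype.card (Fin t → PivotSet n k) : ℝ)
      = (Fintype.card (PivotSet n k) : ℝ) ^ t := by
    rw [Fintype.card_fun, Fintype.card_fin]
    push_cast
    ring
  rw [hcard, mul_div_assoc, div_self (pow_ne_zero _ hC.ne'), mul_one]
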